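/- Let V be a finite type with n = card V ≥ 1, let T ≥ 1, and let E : ℕ → V → V → Prop be a time-indexed edge relation such that for every k the window-union relation U_k a b := (∃ t, k ≤ t ∧ t < k + T ∧ E t a b) is strongly connected (for all a, b, Relation.ReflTransGen (U_k) a b). Then for all vertices u, v ∈ V and every start time k₀ ∈ ℕ, there exists a walk w : ℕ → V with w k₀ = u, w (k₀ + (n−1)·T) = v, and for every t with k₀ ≤ t < k₀ + (n−1)·T, either w (t+1) = w t (waiting) or E t (w t) (w (t+1)) (moving along an edge available at time t). In particular, information from any node reaches any other node within (n−1)·T time steps. -/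

import Mathlib

/-- Reachability at time `s` from `u` at time `k₀` by a time-respecting walk with waiting. -/
def TRReach {V : Type*} (E : ℕ → V → V → Prop) (k₀ : ℕ) (u : V) (s : ℕ) (x : V) : Prop :=
  ∃ w : ℕ → V, w k₀ = u ∧ w s = x ∧
    ∀ t, k₀ ≤ t → t < s → (w (t + 1) = w t ∨ E t (w t) (w (t + 1)))

lemma trreach_self {V : Type*} (E : ℕ → V → V → Prop) (k₀ : ℕ) (u : V) :
    TRReach E k₀ u k₀ u :=
  ⟨fun _ => u, rfl, rfl, fun t ht ht' => absurd ht' (by omega)⟩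

lemma trreach_wait {V : Type*} {E : ℕ → V → V → Prop} {k₀ s : ℕ} {u x : V}
    (hs : k₀ ≤ s) (h : TRReach E k₀ u s x) : TRReach E k₀ u (s + 1) x := by
  obtain ⟨w, hw0, hws, hstep⟩ := h
  refine ⟨fun t => if t ≤ s then w t else x, by simp [hs, hw0], by simp, ?_⟩
  intro t ht ht'
  by_cases hlt : t < s
  · have h1 : t ≤ s := hlt.le
    have h2 : t + 1 ≤ s := hlt
    simpa [h1, h2] using hstep t ht hlt
  · have hts : t = s := by omega
    subst hts
    left
    simp [hws]

lemma trreach_mono {V : Type*} {E : ℕ → V → V → Prop} {k₀ s s' : ℕ} {u x : V}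
    (hs : k₀ ≤ s) (hss' : s ≤ s') (h : TRReach E k₀ u s x) : TRReach E k₀ u s' x := by
  induction s' with
  | zero =>
    have h0 : s = 0 := by omega
    exact h0 ▸ h
  | succ m ih =>
    rcases Nat.lt_or_ge s (m + 1) with hlt | hge
    · exact trreach_wait (by omega) (ih (by omega))
    · have : s = m + 1 := by omega
      exact this ▸ h

lemma trreach_step {V : Type*} {E : ℕ → V → V → Prop} {k₀ s t : ℕ} {u a b : V}
    (hs : k₀ ≤ s) (hst : s ≤ t) (h : TRReach E k₀ u s a) (he : E t a b) :
    TRReach E k₀ u (t + 1) b := by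
  obtain ⟨w, hw0, hws, hstep⟩ := trreach_mono hs hst h
  refine ⟨fun t' => if t' ≤ t then w t' else b, by simp [hs.trans hst, hw0], by simp, ?_⟩
  intro t' ht' ht''
  by_cases hlt : t' < t
  · have h1 : t' ≤ t := hlt.le
    have h2 : t' + 1 ≤ t := hlt
    simpa [h1, h2] using hstep t' ht' hlt
  · have hts : t' = t := by omega
    subst hts
    right
    simpa [hws] using he

lemma exists_crossing {V : Type*} {r : V → V → Prop} {S : Set V} {a b : V}
    (h : Relation.ReflTransGen r a b) (ha : a ∈ S) (hb : b ∉ S) :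
    ∃ x ∈ S, ∃ y, y ∉ S ∧ r x y := by
  induction h using Relation.ReflTransGen.head_induction_on with
  | refl => exact absurd ha hb
  | head hac _ ih =>
    rename_i a' c _
    by_cases hc : c ∈ S
    · exact ih hc
    · exact ⟨a', ha, c, hc, hac⟩

theorem jointly_strongly_connected_time_respecting_walk
    {V : Type*} [Fintype V] (n : ℕ) (hn : n = Fintype.card V) (hn1 : 1 ≤ n)
    (T : ℕ) (hT : 1 ≤ T) (E : ℕ → V → V → Prop)
    (hSC : ∀ k : ℕ, ∀ a b : V,
      Relation.ReflTransGen (fun a b => ∃ t, k ≤ t ∧ t < k + T ∧ E t a b) a b) :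
    ∀ u v : V, ∀ k₀ : ℕ,
      ∃ w : ℕ → V, w k₀ = u ∧ w (k₀ + (n - 1) * T) = v ∧
        ∀ t : ℕ, k₀ ≤ t → t < k₀ + (n - 1) * T →
          w (t + 1) = w t ∨ E t (w t) (w (t + 1)) := by
  intro u v k₀
  set R : ℕ → Set V := fun s => {x | TRReach E k₀ u s x} with hR
  -- growth over one window
  have grow : ∀ s, k₀ ≤ s → ∀ b, b ∉ R s → (R s).ncard + 1 ≤ (R (s + T)).ncard := by
    intro s hs b hb
    obtain ⟨x, hx, y, hy, t, hst, htT, he⟩ :=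
      exists_crossing (hSC s u b) (show u ∈ R s from trreach_mono le_rfl hs (trreach_self E k₀ u)) hb
    have hy' : y ∈ R (s + T) :=
      trreach_mono (by omega) (by omega) (trreach_step hs hst hx he)
    have hsub : R s ⊆ R (s + T) := fun z hz => trreach_mono hs (by omega) hz
    have hss : R s ⊂ R (s + T) := ⟨hsub, fun hcon => hy (hcon hy')⟩
    exact Set.ncard_lt_ncard hss (Set.toFinite _)
  -- main induction
  have key : ∀ m, m + 1 ≤ (R (k₀ + m * T)).ncard ∨ ∀ z, z ∈ R (k₀ + m * T) := by
    intro m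
    induction m with
    | zero =>
      left
      have : u ∈ R k₀ := trreach_self E k₀ u
      simpa [Nat.one_le_iff_ne_zero, Nat.pos_iff_ne_zero] using (Set.ncard_pos (Set.toFinite (R k₀))).2 ⟨u, this⟩
    | succ m ih =>
      rcases ih with h | h
      · by_cases hall : ∀ z, z ∈ R (k₀ + m * T)
        · right
          intro z
          exact trreach_mono (by omega) (by ring_nf; omega) (hall z)
        · push_neg at hall
          obtain ⟨b, hb⟩ := hall
          left
          have := grow (k₀ + m * T) (by omega) b hb
          have heq : k₀ + m * T + T = k₀ + (m + 1) * T := by ring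
          rw [heq] at this
          omega
      · right
        intro z
        exact trreach_mono (by omega) (by ring_nf; omega) (h z)
  have hv : v ∈ R (k₀ + (n - 1) * T) := by
    rcases key (n - 1) with h | h
    · have h1 : (R (k₀ + (n - 1) * T)).ncard ≤ n := by
        rw [hn, ← Nat.card_eq_fintype_card, ← Set.ncard_univ]
        exact Set.ncard_le_ncard (Set.subset_univ _) (Set.toFinite _)
      have h2 : n ≤ (R (k₀ + (n - 1) * T)).ncard := by omega
      have := Set.eq_of_subset_of_ncard_le (Set.subset_univ (R (k₀ + (n - 1) * T)))
        (by rw [Set.ncard_univ, Nat.card_eq_fintype_card, ← hn]; omega) (Set.toFinite _)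
      rw [this]; trivial
    · exact h v
  obtain ⟨w, hw0, hws, hstep⟩ := hv
  exact ⟨w, hw0, hws, hstep⟩
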